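/- Fix θ ∈ (0,1) and x ∈ (0, 1/2). For each n ≥ 1 let aₙ = 1 − θ/n and zₙ = (1 − aₙ)²/aₙ². Let (kₙ) be a sequence of integers with 1 ≤ kₙ ≤ n − 1 and kₙ/n → x as n → ∞. Then Σ_{γ=1}^{kₙ} zₙ^{γ−1} · (1/γ) · C(kₙ−1, γ−1) · C(n−kₙ−1, γ−1) converges as n → ∞ to I₁(2θ√(x(1−x)))/(θ√(x(1−x))), where C denotes the binomial coefficient. (This sum equals the terminating hypergeometric value ₂F₁(−(kₙ−1), −(n−kₙ−1); 2; zₙ).) -/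

import Mathlib

open scoped BigOperators

/-- The modified Bessel function `I₁(z) = Σ_{n=0}^∞ (z/2)^{2n+1}/(n!·(n+1)!)`. -/
noncomputable def besselI1 (z : ℝ) : ℝ :=
  ∑' n : ℕ, (z / 2) ^ (2 * n + 1) / ((Nat.factorial n : ℝ) * (Nat.factorial (n + 1) : ℝ))

/-- Cast of a binomial coefficient as a product, for `m ≤ a`. -/
lemma aux_cast_choose (a m : ℕ) (h : m ≤ a) :
    (a.choose m : ℝ) = (∏ i ∈ Finset.range m, ((a : ℝ) - i)) / (m.factorial : ℝ) := by
  have h1 : (m.factorial * a.choose m : ℕ) = a.descFactorial m :=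
    (Nat.descFactorial_eq_factorial_mul_choose a m).symm
  have h2 : ((a.descFactorial m : ℕ) : ℝ) = ∏ i ∈ Finset.range m, ((a : ℝ) - i) := by
    rw [Nat.descFactorial_eq_prod_range, Nat.cast_prod]
    refine Finset.prod_congr rfl fun i hi => ?_
    have hia : i ≤ a := le_trans (Finset.mem_range.1 hi).le h
    exact Nat.cast_sub hia
  have hf : (m.factorial : ℝ) ≠ 0 := by exact_mod_cast m.factorial_ne_zero
  rw [eq_div_iff hf, ← h2, ← h1]
  push_cast
  ring

set_option maxHeartbeats 2000000 in
open Filter Topology in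
/-- Lemma 8 (second part): with `aₙ = 1 − θ/n`, `zₙ = (1−aₙ)²/aₙ²` and `kₙ/n → x ∈ (0,1/2)`,
`Σ_{γ=1}^{kₙ} zₙ^{γ−1} (1/γ) C(kₙ−1,γ−1) C(n−kₙ−1,γ−1) → I₁(2θ√(x(1−x)))/(θ√(x(1−x)))`
as `n → ∞` (the sum equals `₂F₁(−(kₙ−1), −(n−kₙ−1); 2; zₙ)`). -/
theorem hypergeom_limit_two (θ : ℝ) (hθ : 0 < θ) (hθ1 : θ < 1)
    (x : ℝ) (hx : 0 < x) (hx2 : x < 1 / 2) (k : ℕ → ℕ)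
    (hk : ∀ n : ℕ, 2 ≤ n → 1 ≤ k n ∧ k n ≤ n - 1)
    (hkx : Tendsto (fun n : ℕ => (k n : ℝ) / n) atTop (𝓝 x)) :
    Tendsto (fun n : ℕ =>
        ∑ γ ∈ Finset.Icc 1 (k n),
          ((1 - (1 - θ / n)) ^ 2 / (1 - θ / n) ^ 2) ^ (γ - 1) * (1 / (γ : ℝ))
            * (Nat.choose (k n - 1) (γ - 1) : ℝ) * (Nat.choose (n - k n - 1) (γ - 1) : ℝ))
      atTop
      (𝓝 (besselI1 (2 * θ * Real.sqrt (x * (1 - x))) / (θ * Real.sqrt (x * (1 - x))))) := by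
  obtain ⟨w, hwdef⟩ : ∃ w : ℝ, w = x * (1 - x) := ⟨_, rfl⟩
  have hx1 : x < 1 := by linarith
  have hw : 0 < w := hwdef ▸ mul_pos hx (by linarith)
  have hsqw : Real.sqrt w ^ 2 = w := Real.sq_sqrt hw.le
  have hsqpos : 0 < Real.sqrt w := Real.sqrt_pos.2 hw
  obtain ⟨F, hFdef⟩ : ∃ F : ℕ → ℕ → ℝ, F = fun (n m : ℕ) =>
    ((1 - (1 - θ / (n : ℝ))) ^ 2 / (1 - θ / (n : ℝ)) ^ 2) ^ m * (1 / ((m : ℝ) + 1))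
      * ((k n - 1).choose m : ℝ) * ((n - k n - 1).choose m : ℝ) := ⟨_, rfl⟩
  obtain ⟨g, hgdef⟩ : ∃ g : ℕ → ℝ,
    g = fun (m : ℕ) => (θ ^ 2 * w) ^ m / ((m.factorial : ℝ) ^ 2 * ((m : ℝ) + 1)) := ⟨_, rfl⟩
  -- (A) the limit value is ∑' g
  have hA : besselI1 (2 * θ * Real.sqrt w) / (θ * Real.sqrt w) = ∑' m, g m := by
    have hts : θ * Real.sqrt w ≠ 0 := by positivity
    rw [besselI1, ← tsum_div_const]
    refine tsum_congr fun m => ?_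
    have h2 : 2 * θ * Real.sqrt w / 2 = θ * Real.sqrt w := by ring
    have hfac : ((m + 1).factorial : ℝ) = ((m : ℝ) + 1) * (m.factorial : ℝ) := by
      rw [Nat.factorial_succ]; push_cast; ring
    have hm : (m.factorial : ℝ) ≠ 0 := by exact_mod_cast m.factorial_ne_zero
    have hpow : (θ * Real.sqrt w) ^ (2 * m + 1) = (θ ^ 2 * w) ^ m * (θ * Real.sqrt w) := by
      rw [pow_succ, pow_mul]
      congr 2
      rw [mul_pow, hsqw]
    rw [h2, hpow, hfac]
    simp only [hgdef]
    have hm1 : ((m : ℝ) + 1) ≠ 0 := by positivity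
    field_simp
  -- k n → ∞ in ℝ
  have hkR : Tendsto (fun n : ℕ => (k n : ℝ)) atTop atTop := by
    have hev : ∀ᶠ n : ℕ in atTop, (x / 2) * n ≤ (k n : ℝ) := by
      filter_upwards [hkx.eventually (eventually_gt_nhds (by linarith : x / 2 < x)),
        eventually_ge_atTop 1] with n h hn1
      have hn0 : (0 : ℝ) < n := by exact_mod_cast hn1
      have := (lt_div_iff₀ hn0).1 h
      linarith
    exact tendsto_atTop_mono' _ hev
      (Tendsto.const_mul_atTop (by linarith) tendsto_natCast_atTop_atTop)
  -- n - k n → ∞ in ℝ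
  have hnkR : Tendsto (fun n : ℕ => (n : ℝ) - (k n : ℝ)) atTop atTop := by
    have hev : ∀ᶠ n : ℕ in atTop, ((1 - x) / 2) * n ≤ (n : ℝ) - (k n : ℝ) := by
      filter_upwards [hkx.eventually (eventually_lt_nhds (by linarith : x < (x + 1) / 2)),
        eventually_ge_atTop 1] with n h hn1
      have hn0 : (0 : ℝ) < n := by exact_mod_cast hn1
      have := (div_lt_iff₀ hn0).1 h
      linarith
    exact tendsto_atTop_mono' _ hev
      (Tendsto.const_mul_atTop (by linarith) tendsto_natCast_atTop_atTop)
  -- (C) the uniform bound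
  have hbound : ∀ᶠ n : ℕ in atTop, ∀ m : ℕ, ‖F n m‖ ≤ (4 : ℝ) ^ m / m.factorial := by
    filter_upwards [eventually_ge_atTop 2] with n hn
    intro m
    obtain ⟨hk1, hk2⟩ := hk n hn
    have hkn : k n ≤ n := le_trans hk2 (Nat.sub_le n 1)
    have hnR : (2 : ℝ) ≤ n := by exact_mod_cast hn
    have hn0 : (0 : ℝ) < n := by linarith
    have hden : (1 : ℝ) / 2 ≤ 1 - θ / n := by
      have hθn : θ / (n : ℝ) ≤ 1 / 2 := by
        rw [div_le_iff₀ hn0]; nlinarith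
      linarith
    have hdenpos : (0 : ℝ) < 1 - θ / n := by linarith
    have hfacpos : (0 : ℝ) < m.factorial := by exact_mod_cast m.factorial_pos
    have hfac1 : (1 : ℝ) ≤ m.factorial := by exact_mod_cast m.factorial_pos
    -- bound on the ratio
    have hZle : (1 - (1 - θ / (n : ℝ))) ^ 2 / (1 - θ / (n : ℝ)) ^ 2 ≤ 4 / (n : ℝ) ^ 2 := by
      have e : (1 - (1 - θ / (n : ℝ))) ^ 2 / (1 - θ / (n : ℝ)) ^ 2 = (θ / ((n : ℝ) - θ)) ^ 2 := by
        have hne : (n : ℝ) - θ ≠ 0 := by nlinarith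
        have hne2 : (n : ℝ) ≠ 0 := by linarith
        have hne3 : (1 : ℝ) - θ / n ≠ 0 := by linarith
        field_simp
        ring
      rw [e]
      have h1 : θ / ((n : ℝ) - θ) ≤ 2 / n := by
        rw [div_le_div_iff₀ (by nlinarith) hn0]
        nlinarith
      have h0 : (0 : ℝ) ≤ θ / ((n : ℝ) - θ) := div_nonneg hθ.le (by nlinarith)
      calc (θ / ((n : ℝ) - θ)) ^ 2 ≤ (2 / (n : ℝ)) ^ 2 := by
            exact pow_le_pow_left₀ h0 h1 2
        _ = 4 / (n : ℝ) ^ 2 := by rw [div_pow]; norm_num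
    -- choose bounds
    have c1 : ((k n - 1).choose m : ℝ) ≤ (n : ℝ) ^ m / m.factorial := by
      rw [le_div_iff₀ hfacpos]
      have hnat : (k n - 1).choose m * m.factorial ≤ n ^ m := by
        calc (k n - 1).choose m * m.factorial = (k n - 1).descFactorial m := by
              rw [Nat.descFactorial_eq_factorial_mul_choose]; ring
          _ ≤ (k n - 1) ^ m := Nat.descFactorial_le_pow _ _
          _ ≤ n ^ m := Nat.pow_le_pow_left (by omega) m
      exact_mod_cast hnat
    have c2 : ((n - k n - 1).choose m : ℝ) ≤ (n : ℝ) ^ m / m.factorial := by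
      rw [le_div_iff₀ hfacpos]
      have hnat : (n - k n - 1).choose m * m.factorial ≤ n ^ m := by
        calc (n - k n - 1).choose m * m.factorial = (n - k n - 1).descFactorial m := by
              rw [Nat.descFactorial_eq_factorial_mul_choose]; ring
          _ ≤ (n - k n - 1) ^ m := Nat.descFactorial_le_pow _ _
          _ ≤ n ^ m := Nat.pow_le_pow_left (by omega) m
      exact_mod_cast hnat
    have hF0 : 0 ≤ F n m := by
      simp only [hFdef]
      positivity
    rw [Real.norm_eq_abs, abs_of_nonneg hF0]
    simp only [hFdef]
    have hm1 : (0 : ℝ) < (m : ℝ) + 1 := by positivity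
    calc ((1 - (1 - θ / (n : ℝ))) ^ 2 / (1 - θ / (n : ℝ)) ^ 2) ^ m * (1 / ((m : ℝ) + 1))
          * ((k n - 1).choose m : ℝ) * ((n - k n - 1).choose m : ℝ)
        ≤ (4 / (n : ℝ) ^ 2) ^ m * 1 * ((n : ℝ) ^ m / m.factorial) * ((n : ℝ) ^ m / m.factorial) := by
          have hm1le : 1 / ((m : ℝ) + 1) ≤ 1 := by
            rw [div_le_one hm1]; linarith [(Nat.cast_nonneg m : (0:ℝ) ≤ m)]
          gcongr
      _ = (4 : ℝ) ^ m / ((m.factorial : ℝ) * m.factorial) := by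
          have hne : (n : ℝ) ^ m ≠ 0 := by positivity
          have hne2 : (m.factorial : ℝ) ≠ 0 := by positivity
          rw [mul_one, div_pow, ← pow_mul, two_mul, pow_add]
          field_simp
      _ ≤ (4 : ℝ) ^ m / m.factorial := by
          have h : (m.factorial : ℝ) ≤ m.factorial * m.factorial := by nlinarith
          exact div_le_div_of_nonneg_left (by positivity) hfacpos h
  -- (D) pointwise limits
  have hpt : ∀ m : ℕ, Tendsto (fun n : ℕ => F n m) atTop (𝓝 (g m)) := by
    intro m
    have hθn : Tendsto (fun n : ℕ => θ / (n : ℝ)) atTop (𝓝 0) :=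
      tendsto_const_div_atTop_nhds_zero_nat θ
    have hquot : Tendsto (fun n : ℕ => θ ^ 2 / (1 - θ / (n : ℝ)) ^ 2) atTop (𝓝 (θ ^ 2)) := by
      have h1 : Tendsto (fun n : ℕ => (1 - θ / (n : ℝ)) ^ 2) atTop (𝓝 1) := by
        have h0 : Tendsto (fun n : ℕ => 1 - θ / (n : ℝ)) atTop (𝓝 1) := by
          simpa using tendsto_const_nhds.sub hθn
        simpa using h0.pow 2
      simpa [Pi.div_def] using tendsto_const_nhds.div h1 one_ne_zero
    have hfac : ∀ i : ℕ, Tendsto (fun n : ℕ =>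
        θ ^ 2 / (1 - θ / (n : ℝ)) ^ 2 * ((k n : ℝ) / n - (1 + (i : ℝ)) / n)
          * (1 - (k n : ℝ) / n - (1 + (i : ℝ)) / n)) atTop (𝓝 (θ ^ 2 * w)) := by
      intro i
      have hc : Tendsto (fun n : ℕ => (1 + (i : ℝ)) / n) atTop (𝓝 0) :=
        tendsto_const_div_atTop_nhds_zero_nat _
      have := (hquot.mul (hkx.sub hc)).mul (((tendsto_const_nhds (x := (1:ℝ))).sub hkx).sub hc)
      rw [hwdef]
      convert this using 2 <;> ring
    have hprod : Tendsto (fun n : ℕ => (1 / ((m.factorial : ℝ) ^ 2 * ((m : ℝ) + 1))) *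
        ∏ i ∈ Finset.range m, (θ ^ 2 / (1 - θ / (n : ℝ)) ^ 2 * ((k n : ℝ) / n - (1 + (i : ℝ)) / n)
          * (1 - (k n : ℝ) / n - (1 + (i : ℝ)) / n))) atTop (𝓝 (g m)) := by
      have hp := tendsto_finset_prod (Finset.range m) (fun i _ => hfac i)
      have h2 := (tendsto_const_nhds
        (x := (1 / ((m.factorial : ℝ) ^ 2 * ((m : ℝ) + 1)))) (f := atTop)).mul hp
      convert h2 using 1
      simp only [hgdef, hwdef]
      simp only [Finset.prod_const, Finset.card_range]
      have hm1 : ((m : ℝ) + 1) ≠ 0 := by positivity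
      have hmf : (m.factorial : ℝ) ≠ 0 := by positivity
      field_simp
    -- eventual equality
    have hkm : ∀ᶠ n : ℕ in atTop, m + 1 ≤ k n := by
      filter_upwards [hkR.eventually_ge_atTop ((m : ℝ) + 1)] with n h
      exact_mod_cast h
    have hnkm : ∀ᶠ n : ℕ in atTop, k n + (m + 2) ≤ n := by
      filter_upwards [hnkR.eventually_ge_atTop ((m : ℝ) + 2)] with n h
      have : (k n : ℝ) + ((m : ℝ) + 2) ≤ n := by linarith
      exact_mod_cast this
    have heq : (fun n : ℕ => (1 / ((m.factorial : ℝ) ^ 2 * ((m : ℝ) + 1))) *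
        ∏ i ∈ Finset.range m, (θ ^ 2 / (1 - θ / (n : ℝ)) ^ 2 * ((k n : ℝ) / n - (1 + (i : ℝ)) / n)
          * (1 - (k n : ℝ) / n - (1 + (i : ℝ)) / n))) =ᶠ[atTop] fun n => F n m := by
      filter_upwards [eventually_ge_atTop 2, hkm, hnkm] with n hn hkmn hnkmn
      have hnR : (2 : ℝ) ≤ n := by exact_mod_cast hn
      have hn0 : (0 : ℝ) < n := by linarith
      have hne : (n : ℝ) ≠ 0 := by linarith
      have hden : (1 : ℝ) / 2 ≤ 1 - θ / n := by
        have hθn2 : θ / (n : ℝ) ≤ 1 / 2 := by rw [div_le_iff₀ hn0]; nlinarith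
        linarith
      have hdne : (1 : ℝ) - θ / n ≠ 0 := by linarith
      obtain ⟨hk1, -⟩ := hk n hn
      have hmf : (m.factorial : ℝ) ≠ 0 := by positivity
      have hm1 : ((m : ℝ) + 1) ≠ 0 := by positivity
      -- cast the binomial coefficients
      have e1 : ((k n - 1).choose m : ℝ) = (∏ i ∈ Finset.range m, ((k n : ℝ) - 1 - i)) /
          m.factorial := by
        rw [aux_cast_choose (k n - 1) m (by omega)]
        congr 1
        refine Finset.prod_congr rfl fun i hi => ?_
        rw [Nat.cast_sub hk1, Nat.cast_one]
      have e2 : ((n - k n - 1).choose m : ℝ) = (∏ i ∈ Finset.range m, ((n : ℝ) - k n - 1 - i)) /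
          m.factorial := by
        rw [aux_cast_choose (n - k n - 1) m (by omega)]
        congr 1
        refine Finset.prod_congr rfl fun i hi => ?_
        have h1 : ((n - k n - 1 : ℕ) : ℝ) = (n : ℝ) - k n - 1 := by
          have hle1 : k n ≤ n := by omega
          have hle2 : 1 ≤ n - k n := by omega
          push_cast [Nat.cast_sub hle2, Nat.cast_sub hle1]
          ring
        rw [h1]
      -- rewrite the product
      have eprod : ∏ i ∈ Finset.range m, (θ ^ 2 / (1 - θ / (n : ℝ)) ^ 2
            * ((k n : ℝ) / n - (1 + (i : ℝ)) / n) * (1 - (k n : ℝ) / n - (1 + (i : ℝ)) / n))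
          = ((1 - (1 - θ / (n : ℝ))) ^ 2 / (1 - θ / (n : ℝ)) ^ 2) ^ m
            * (∏ i ∈ Finset.range m, ((k n : ℝ) - 1 - i))
            * (∏ i ∈ Finset.range m, ((n : ℝ) - k n - 1 - i)) := by
        have step : ∀ i ∈ Finset.range m, θ ^ 2 / (1 - θ / (n : ℝ)) ^ 2
            * ((k n : ℝ) / n - (1 + (i : ℝ)) / n) * (1 - (k n : ℝ) / n - (1 + (i : ℝ)) / n)
            = ((1 - (1 - θ / (n : ℝ))) ^ 2 / (1 - θ / (n : ℝ)) ^ 2) * ((k n : ℝ) - 1 - i)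
              * ((n : ℝ) - k n - 1 - i) := by
          intro i hi
          have hB : (1 : ℝ) - (k n : ℝ) / n - (1 + (i : ℝ)) / n
              = ((n : ℝ) - (k n : ℝ) - 1 - (i : ℝ)) / n := by
            field_simp
            ring
          rw [hB]
          ring
        rw [Finset.prod_congr rfl step]
        rw [Finset.prod_mul_distrib, Finset.prod_mul_distrib, Finset.prod_const,
          Finset.card_range]
      simp only [hFdef]
      rw [eprod, e1, e2]
      field_simp
    exact hprod.congr' heq
  -- (B) finite sum = tsum, eventually
  have hsum_eq : ∀ᶠ n : ℕ in atTop, (∑ γ ∈ Finset.Icc 1 (k n),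
      ((1 - (1 - θ / (n : ℝ))) ^ 2 / (1 - θ / (n : ℝ)) ^ 2) ^ (γ - 1) * (1 / (γ : ℝ))
        * ((k n - 1).choose (γ - 1) : ℝ) * ((n - k n - 1).choose (γ - 1) : ℝ))
      = ∑' m, F n m := by
    filter_upwards [eventually_ge_atTop 2] with n hn
    obtain ⟨hk1, -⟩ := hk n hn
    have hvan : ∀ m ∉ Finset.range (k n), F n m = 0 := by
      intro m hm
      have hlt : k n - 1 < m := by
        have := Finset.mem_range.not.1 hm
        omega
      simp only [hFdef]
      simp [Nat.choose_eq_zero_of_lt hlt]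
    rw [tsum_eq_sum hvan, ← Finset.Ico_add_one_right_eq_Icc, Finset.sum_Ico_eq_sum_range]
    refine Finset.sum_congr (by simp) fun i hi => ?_
    simp only [hFdef]
    simp only [Nat.add_sub_cancel_left]
    push_cast
    ring
  -- assemble
  have main : Tendsto (fun n : ℕ => ∑' m, F n m) atTop (𝓝 (∑' m, g m)) :=
    tendsto_tsum_of_dominated_convergence (Real.summable_pow_div_factorial 4) hpt hbound
  rw [show x * (1 - x) = w from hwdef.symm, hA]
  exact main.congr' (hsum_eq.mono fun n h => h.symm)
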